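/- Let G be a real random variable whose density near K is bounded by ρ_max, and let Ĝ_f, Ĝ_c be approximations with E[|Ĝ_f - G|^q]^{1/q} ≤ σ and E[|Ĝ_c - G|^q]^{1/q} ≤ σ for some q > 1. Then E[(H(Ĝ_f - K) - H(Ĝ_c - K))²] ≤ 2(2 ρ_max t + 2 σ^q / t^q) for every t > 0, and optimizing over t gives a bound of order ρ_max^{q/(q+1)} σ^{q/(q+1)}. -/

import Mathlib

open MeasureTheory ProbabilityTheory

noncomputable def Heaviside (x : ℝ) : ℝ := if x < 0 then 0 else 1

lemma heaviside_measurable : Measurable Heaviside := by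
  unfold Heaviside
  exact Measurable.ite (measurableSet_lt measurable_id measurable_const)
    measurable_const measurable_const

lemma heaviside_mem (x : ℝ) : Heaviside x = 0 ∨ Heaviside x = 1 := by
  unfold Heaviside; split <;> simp

theorem avikainen_estimate
    (q : ℝ) (hq : 1 < q) :
    ∃ C > 0, ∀ {Ω : Type} [MeasureSpace Ω] [IsProbabilityMeasure (ℙ : Measure Ω)]
      (G Gf Gc : Ω → ℝ), Measurable G → Measurable Gf → Measurable Gc →
      ∀ (K ρmax σ : ℝ), 0 ≤ ρmax → 0 ≤ σ →
      (∀ t : ℝ, 0 < t → (ℙ {ω | |G ω - K| ≤ t}).toReal ≤ 2 * ρmax * t) →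
      Integrable (fun ω => |Gf ω - G ω| ^ q) ℙ →
      Integrable (fun ω => |Gc ω - G ω| ^ q) ℙ →
      (∫ ω, |Gf ω - G ω| ^ q ∂ℙ) ^ (1/q) ≤ σ →
      (∫ ω, |Gc ω - G ω| ^ q ∂ℙ) ^ (1/q) ≤ σ →
      (∀ t : ℝ, 0 < t →
        (∫ ω, (Heaviside (Gf ω - K) - Heaviside (Gc ω - K))^2 ∂ℙ)
          ≤ 2 * (2 * ρmax * t + 2 * σ^q / t^q)) ∧
      (∫ ω, (Heaviside (Gf ω - K) - Heaviside (Gc ω - K))^2 ∂ℙ)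
          ≤ C * ρmax ^ (q/(q+1)) * σ ^ (q/(q+1)) := by
  have hq0 : 0 < q := lt_trans zero_lt_one hq
  refine ⟨8, by norm_num, ?_⟩
  intro Ω _ _ G Gf Gc hG hGf hGc K ρmax σ hρ hσ hdens hif hic hLf hLc
  set f : Ω → ℝ := fun ω => (Heaviside (Gf ω - K) - Heaviside (Gc ω - K))^2 with hf_def
  -- basic properties of f
  have hf01 : ∀ ω, f ω = 0 ∨ f ω = 1 := by
    intro ω
    rcases heaviside_mem (Gf ω - K) with h1 | h1 <;>
      rcases heaviside_mem (Gc ω - K) with h2 | h2 <;>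
      simp [hf_def, h1, h2]
  have hf_nonneg : ∀ ω, 0 ≤ f ω := fun ω => sq_nonneg _
  have hf_le_one : ∀ ω, f ω ≤ 1 := by
    intro ω; rcases hf01 ω with h | h <;> simp [h]
  have hf_meas : Measurable f := by
    apply Measurable.pow _ measurable_const
    exact ((heaviside_measurable.comp (hGf.sub measurable_const)).sub
      (heaviside_measurable.comp (hGc.sub measurable_const)))
  have hf_int : Integrable f ℙ := by
    refine Integrable.mono' (integrable_const 1) hf_meas.aestronglyMeasurable
      (ae_of_all _ fun ω => ?_)
    rw [Real.norm_eq_abs, abs_of_nonneg (hf_nonneg ω)]; exact hf_le_one ω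
  -- moment bounds
  have moment : ∀ (X : Ω → ℝ), Measurable X →
      Integrable (fun ω => |X ω - G ω| ^ q) ℙ →
      (∫ ω, |X ω - G ω| ^ q ∂ℙ) ^ (1/q) ≤ σ →
      ∀ t : ℝ, 0 < t → (ℙ {ω | t < |X ω - G ω|}).toReal ≤ σ ^ q / t ^ q := by
    intro X hX hint hL t ht
    have hI0 : 0 ≤ ∫ ω, |X ω - G ω| ^ q ∂ℙ :=
      integral_nonneg fun ω => Real.rpow_nonneg (abs_nonneg _) _
    have hIσ : (∫ ω, |X ω - G ω| ^ q ∂ℙ) ≤ σ ^ q := by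
      have h2 : ((∫ ω, |X ω - G ω| ^ q ∂ℙ) ^ (1/q)) ^ q ≤ σ ^ q :=
        Real.rpow_le_rpow (Real.rpow_nonneg hI0 _) hL hq0.le
      rwa [← Real.rpow_mul hI0, one_div_mul_cancel hq0.ne', Real.rpow_one] at h2
    have hsub : {ω | t < |X ω - G ω|} ⊆ {ω | t ^ q ≤ |X ω - G ω| ^ q} := by
      intro ω hω
      exact (Real.rpow_le_rpow ht.le (le_of_lt hω) hq0.le)
    have hmarkov := mul_meas_ge_le_integral_of_nonneg
      (ae_of_all _ fun ω => Real.rpow_nonneg (abs_nonneg (X ω - G ω)) q) hint (t ^ q)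
    have htq : (0:ℝ) < t ^ q := Real.rpow_pos_of_pos ht q
    have hmono : (ℙ {ω | t < |X ω - G ω|}).toReal ≤
        (ℙ {ω | t ^ q ≤ |X ω - G ω| ^ q}).toReal := by
      apply ENNReal.toReal_mono (measure_ne_top _ _)
      exact measure_mono hsub
    calc (ℙ {ω | t < |X ω - G ω|}).toReal
        ≤ (ℙ {ω | t ^ q ≤ |X ω - G ω| ^ q}).toReal := hmono
      _ ≤ (∫ ω, |X ω - G ω| ^ q ∂ℙ) / t ^ q := by
          rw [le_div_iff₀ htq]
          simp only [Measure.real] at hmarkov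
          linarith [hmarkov]
      _ ≤ σ ^ q / t ^ q := by
          gcongr
  have momf := moment Gf hGf hif hLf
  have momc := moment Gc hGc hic hLc
  -- key estimate
  have key : ∀ t : ℝ, 0 < t →
      (∫ ω, f ω ∂ℙ) ≤ 2 * ρmax * t + 2 * σ^q / t^q := by
    intro t ht
    set S1 := {ω | |G ω - K| ≤ t} with hS1d
    set S2 := {ω | t < |Gf ω - G ω|} with hS2d
    set S3 := {ω | t < |Gc ω - G ω|} with hS3d
    have hS1 : MeasurableSet S1 :=
      measurableSet_le ((hG.sub measurable_const).abs) measurable_const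
    have hS2 : MeasurableSet S2 := measurableSet_lt measurable_const ((hGf.sub hG).abs)
    have hS3 : MeasurableSet S3 := measurableSet_lt measurable_const ((hGc.sub hG).abs)
    have ind_nonneg : ∀ (S : Set Ω) (ω : Ω), (0:ℝ) ≤ S.indicator 1 ω :=
      fun S ω => Set.indicator_nonneg (fun _ _ => zero_le_one) _
    have ind_le : ∀ (S : Set Ω) (ω : Ω), ω ∈ S → f ω ≤ S.indicator 1 ω := by
      intro S ω hωS
      rw [Set.indicator_of_mem hωS]
      exact hf_le_one ω
    have hpt : ∀ ω, f ω ≤ S1.indicator 1 ω + S2.indicator 1 ω + S3.indicator 1 ω := by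
      intro ω
      by_cases h1 : ω ∈ S1
      · linarith [ind_le S1 ω h1, ind_nonneg S2 ω, ind_nonneg S3 ω]
      by_cases h2 : ω ∈ S2
      · linarith [ind_le S2 ω h2, ind_nonneg S1 ω, ind_nonneg S3 ω]
      by_cases h3 : ω ∈ S3
      · linarith [ind_le S3 ω h3, ind_nonneg S1 ω, ind_nonneg S2 ω]
      · -- outside all three: f ω = 0
        have hG' : t < |G ω - K| := lt_of_not_ge h1
        have h2' : |Gf ω - G ω| ≤ t := le_of_not_gt h2
        have h3' : |Gc ω - G ω| ≤ t := le_of_not_gt h3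
        have h2a := abs_le.mp h2'
        have h3a := abs_le.mp h3'
        have hfz : f ω = 0 := by
          have heq : Heaviside (Gf ω - K) = Heaviside (Gc ω - K) := by
            rcases lt_abs.mp hG' with hg | hg
            · -- G ω - K > t, both arguments positive
              unfold Heaviside
              rw [if_neg (by linarith [h2a.1] : ¬ (Gf ω - K < 0)),
                  if_neg (by linarith [h3a.1] : ¬ (Gc ω - K < 0))]
            · -- G ω - K < -t, both arguments negative
              unfold Heaviside
              rw [if_pos (by linarith [h2a.2] : Gf ω - K < 0),
                  if_pos (by linarith [h3a.2] : Gc ω - K < 0)]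
          simp [hf_def, heq]
        rw [hfz]
        linarith [ind_nonneg S1 ω, ind_nonneg S2 ω, ind_nonneg S3 ω]
    have hi1 : Integrable (S1.indicator (1 : Ω → ℝ)) ℙ := (integrable_const 1).indicator hS1
    have hi2 : Integrable (S2.indicator (1 : Ω → ℝ)) ℙ := (integrable_const 1).indicator hS2
    have hi3 : Integrable (S3.indicator (1 : Ω → ℝ)) ℙ := (integrable_const 1).indicator hS3
    have hstep : (∫ ω, f ω ∂ℙ) ≤
        (ℙ S1).toReal + (ℙ S2).toReal + (ℙ S3).toReal := by
      calc (∫ ω, f ω ∂ℙ)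
          ≤ ∫ ω, (S1.indicator 1 ω + S2.indicator 1 ω + S3.indicator 1 ω) ∂ℙ :=
            integral_mono hf_int ((hi1.add hi2).add hi3) hpt
        _ = (ℙ S1).toReal + (ℙ S2).toReal + (ℙ S3).toReal := by
            have e1 : (∫ ω, (S1.indicator 1 ω + S2.indicator 1 ω + S3.indicator 1 ω) ∂ℙ)
                = (∫ ω, (S1.indicator 1 ω + S2.indicator 1 ω) ∂ℙ)
                  + ∫ ω, S3.indicator 1 ω ∂ℙ := integral_add (hi1.add hi2) hi3
            have e2 : (∫ ω, (S1.indicator 1 ω + S2.indicator 1 ω) ∂ℙ)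
                = (∫ ω, S1.indicator 1 ω ∂ℙ) + ∫ ω, S2.indicator 1 ω ∂ℙ :=
              integral_add hi1 hi2
            rw [e1, e2, integral_indicator_one hS1, integral_indicator_one hS2,
              integral_indicator_one hS3]
            rfl
    have b1 := hdens t ht
    have b2 := momf t ht
    have b3 := momc t ht
    calc (∫ ω, f ω ∂ℙ) ≤ (ℙ S1).toReal + (ℙ S2).toReal + (ℙ S3).toReal := hstep
      _ ≤ 2 * ρmax * t + σ^q/t^q + σ^q/t^q := by exact add_le_add (add_le_add b1 b2) b3
      _ = 2 * ρmax * t + 2 * σ^q / t^q := by ring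
  have htq_pos : ∀ t : ℝ, 0 < t → (0:ℝ) < t ^ q := fun t ht => Real.rpow_pos_of_pos ht q
  have hσq : (0:ℝ) ≤ σ ^ q := Real.rpow_nonneg hσ q
  constructor
  · intro t ht
    have h := key t ht
    have h1 : (0:ℝ) ≤ 2 * ρmax * t := by positivity
    have h2 : (0:ℝ) ≤ 2 * σ^q / t^q := by positivity
    linarith
  · -- optimized bound
    have hq1 : (0:ℝ) < q + 1 := by linarith
    set α := q / (q + 1) with hα
    set β := 1 / (q + 1) with hβ
    have hαpos : 0 < α := div_pos hq0 hq1
    have hβα : 1 - β = α := by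
      rw [hβ, hα, eq_div_iff hq1.ne', sub_mul, div_mul_cancel₀ _ hq1.ne']; ring
    have hβq : β * q = α := by rw [hβ, hα]; ring
    have hαs : α * (q + 1) = q := by rw [hα, div_mul_cancel₀ _ hq1.ne']
    have hαq : q - α * q = α := by
      have := hαs
      nlinarith [hαs]
    rcases eq_or_lt_of_le hσ with hσ0 | hσpos
    · -- σ = 0
      have hσ0' : σ = 0 := hσ0.symm
      subst hσ0'
      rw [Real.zero_rpow hαpos.ne', mul_zero]
      refine le_of_forall_pos_le_add fun ε hε => ?_
      rw [zero_add]
      have ht : (0:ℝ) < ε / (4 * ρmax + 4) := by positivity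
      have h := key _ ht
      rw [Real.zero_rpow hq0.ne'] at h
      have hd : (0:ℝ) < 4 * ρmax + 4 := by positivity
      have h5 : 2 * ρmax * (ε / (4 * ρmax + 4)) ≤ (4 * ρmax + 4) * (ε / (4 * ρmax + 4)) :=
        mul_le_mul_of_nonneg_right (by linarith) ht.le
      have h6 : (4 * ρmax + 4) * (ε / (4 * ρmax + 4)) = ε := by
        rw [mul_comm, div_mul_cancel₀ _ hd.ne']
      have h2 : 2 * (0:ℝ) / (ε / (4 * ρmax + 4)) ^ q = 0 := by ring
      linarith [h, h2]
    rcases eq_or_lt_of_le hρ with hρ0 | hρpos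
    · -- ρmax = 0
      have hρ0' : ρmax = 0 := hρ0.symm
      subst hρ0'
      rw [Real.zero_rpow hαpos.ne', mul_zero, zero_mul]
      refine le_of_forall_pos_le_add fun ε hε => ?_
      rw [zero_add]
      have hbpos : (0:ℝ) < 2 * σ ^ q / ε + 1 := by positivity
      have ht : (0:ℝ) < (2 * σ ^ q / ε + 1) ^ (1/q) := Real.rpow_pos_of_pos hbpos _
      have htq : ((2 * σ ^ q / ε + 1) ^ (1/q)) ^ q = 2 * σ ^ q / ε + 1 := by
        rw [← Real.rpow_mul hbpos.le, one_div_mul_cancel hq0.ne', Real.rpow_one]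
      have h := key _ ht
      rw [htq] at h
      have h4 : ε * (2 * σ ^ q / ε + 1) = 2 * σ ^ q + ε := by field_simp
      have hbound : 2 * σ ^ q / (2 * σ ^ q / ε + 1) ≤ ε := by
        rw [div_le_iff₀ hbpos, h4]
        linarith
      linarith
    · -- main case: both positive
      set t := σ ^ α / ρmax ^ β with htdef
      have hρβ : (0:ℝ) < ρmax ^ β := Real.rpow_pos_of_pos hρpos β
      have hσα : (0:ℝ) < σ ^ α := Real.rpow_pos_of_pos hσpos α
      have ht : 0 < t := div_pos hσα hρβ
      have hA : ρmax * t = ρmax ^ α * σ ^ α := by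
        calc ρmax * t = (ρmax ^ (1:ℝ) / ρmax ^ β) * σ ^ α := by
              rw [htdef, Real.rpow_one]; ring
          _ = ρmax ^ (1 - β) * σ ^ α := by rw [← Real.rpow_sub hρpos]
          _ = ρmax ^ α * σ ^ α := by rw [hβα]
      have hB : σ ^ q / t ^ q = ρmax ^ α * σ ^ α := by
        have htq : t ^ q = σ ^ (α * q) / ρmax ^ (β * q) := by
          rw [htdef, Real.div_rpow hσα.le hρβ.le, ← Real.rpow_mul hσ, ← Real.rpow_mul hρ]
        have hσaq : (0:ℝ) < σ ^ (α * q) := Real.rpow_pos_of_pos hσpos _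
        calc σ ^ q / t ^ q = (σ ^ q / σ ^ (α * q)) * ρmax ^ (β * q) := by
              rw [htq, div_div_eq_mul_div, mul_div_right_comm]
          _ = σ ^ (q - α * q) * ρmax ^ (β * q) := by rw [← Real.rpow_sub hσpos]
          _ = ρmax ^ α * σ ^ α := by rw [hαq, hβq]; ring
      have h := key t ht
      rw [show 2 * ρmax * t + 2 * σ^q / t^q = 2 * (ρmax * t) + 2 * (σ^q / t^q) from by ring,
        hA, hB] at h
      have : (0:ℝ) ≤ ρmax ^ α * σ ^ α := by positivity
      linarith
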